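/- Let P be a symmetric positive definite real n×n matrix, let 0 ≤ ρ < 1, and let A_0, A_1, …, A_{k−1} be real n×n matrices such that A_iᵀ P A_i ⪯ ρ·P for every 0 ≤ i ≤ k−1. Let x_0, …, x_k and w_0, …, w_{k−1} be vectors in ℝⁿ with x_{i+1} = A_i x_i + w_i for 0 ≤ i ≤ k−1. Then ‖x_k‖_P ≤ ρ^{k/2}·‖x_0‖_P + ∑_{i=0}^{k−1} ρ^{(k−1−i)/2}·‖w_i‖_P. -/

import Mathlib

open Matrix

/-- The `P`-weighted norm `‖v‖_P = √(vᵀ P v)` of a vector `v ∈ ℝⁿ`. -/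
noncomputable def normP {n : ℕ} (P : Matrix (Fin n) (Fin n) ℝ) (v : Fin n → ℝ) : ℝ :=
  Real.sqrt (v ⬝ᵥ P.mulVec v)

open Finset in
lemma dot_self_nonneg {n : ℕ} (y : Fin n → ℝ) : 0 ≤ y ⬝ᵥ y := by
  unfold dotProduct
  exact Finset.sum_nonneg fun i _ => mul_self_nonneg _

lemma sqrt_dot_triangle {n : ℕ} (a b : Fin n → ℝ) :
    Real.sqrt ((a + b) ⬝ᵥ (a + b)) ≤ Real.sqrt (a ⬝ᵥ a) + Real.sqrt (b ⬝ᵥ b) := by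
  have hcs : a ⬝ᵥ b ≤ Real.sqrt (a ⬝ᵥ a) * Real.sqrt (b ⬝ᵥ b) := by
    have h := Finset.sum_mul_sq_le_sq_mul_sq Finset.univ a b
    have h2 : (a ⬝ᵥ b) ^ 2 ≤ (a ⬝ᵥ a) * (b ⬝ᵥ b) := by
      unfold dotProduct
      simpa [sq] using h
    calc a ⬝ᵥ b ≤ |a ⬝ᵥ b| := le_abs_self _
      _ = Real.sqrt ((a ⬝ᵥ b) ^ 2) := (Real.sqrt_sq_eq_abs _).symm
      _ ≤ Real.sqrt ((a ⬝ᵥ a) * (b ⬝ᵥ b)) := Real.sqrt_le_sqrt h2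
      _ = _ := Real.sqrt_mul (dot_self_nonneg a) _
  have hexp : (a + b) ⬝ᵥ (a + b) = a ⬝ᵥ a + 2 * (a ⬝ᵥ b) + b ⬝ᵥ b := by
    simp [add_dotProduct, dotProduct_add, dotProduct_comm b a]; ring
  have : (a + b) ⬝ᵥ (a + b) ≤ (Real.sqrt (a ⬝ᵥ a) + Real.sqrt (b ⬝ᵥ b)) ^ 2 := by
    rw [hexp, add_sq, Real.sq_sqrt (dot_self_nonneg a), Real.sq_sqrt (dot_self_nonneg b)]
    nlinarith [hcs]
  calc Real.sqrt ((a + b) ⬝ᵥ (a + b)) ≤ Real.sqrt ((Real.sqrt (a ⬝ᵥ a) + Real.sqrt (b ⬝ᵥ b)) ^ 2) :=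
        Real.sqrt_le_sqrt this
    _ = _ := Real.sqrt_sq (by positivity)

open scoped MatrixOrder in
lemma quad_eq_sqrt {n : ℕ} {P : Matrix (Fin n) (Fin n) ℝ} (hP : P.PosSemidef) (v : Fin n → ℝ) :
    v ⬝ᵥ P.mulVec v = ((CFC.sqrt P).mulVec v) ⬝ᵥ ((CFC.sqrt P).mulVec v) := by
  set S := CFC.sqrt P with hS
  have hsym : Sᵀ = S := by
    have := (CFC.sqrt_nonneg P).posSemidef.1
    simpa [Matrix.IsHermitian] using this
  have hmul : S * S = P := CFC.sqrt_mul_sqrt_self P hP.nonneg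
  calc v ⬝ᵥ P.mulVec v = v ⬝ᵥ (S * S).mulVec v := by rw [hmul]
    _ = v ⬝ᵥ S.mulVec (S.mulVec v) := by rw [← Matrix.mulVec_mulVec]
    _ = (Matrix.vecMul v S) ⬝ᵥ (S.mulVec v) := by rw [Matrix.dotProduct_mulVec]
    _ = (S.mulVec v) ⬝ᵥ (S.mulVec v) := by rw [← Matrix.mulVec_transpose, hsym]

lemma normP_triangle {n : ℕ} {P : Matrix (Fin n) (Fin n) ℝ} (hP : P.PosSemidef)
    (a b : Fin n → ℝ) : normP P (a + b) ≤ normP P a + normP P b := by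
  unfold normP
  rw [quad_eq_sqrt hP, quad_eq_sqrt hP a, quad_eq_sqrt hP b, Matrix.mulVec_add]
  exact sqrt_dot_triangle _ _

lemma normP_contract {n : ℕ} {P : Matrix (Fin n) (Fin n) ℝ} {ρ : ℝ} (hρ0 : 0 ≤ ρ)
    {A : Matrix (Fin n) (Fin n) ℝ} (h : (ρ • P - Aᵀ * P * A).PosSemidef) (v : Fin n → ℝ) :
    normP P (A.mulVec v) ≤ Real.sqrt ρ * normP P v := by
  have h1 := h.dotProduct_mulVec_nonneg v
  have hq : (A.mulVec v) ⬝ᵥ P.mulVec (A.mulVec v) = v ⬝ᵥ (Aᵀ * P * A).mulVec v := by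
    rw [Matrix.dotProduct_mulVec, Matrix.dotProduct_mulVec, Matrix.dotProduct_mulVec,
      ← Matrix.vecMul_vecMul, ← Matrix.vecMul_vecMul, Matrix.vecMul_transpose]
  have key : (A.mulVec v) ⬝ᵥ P.mulVec (A.mulVec v) ≤ ρ * (v ⬝ᵥ P.mulVec v) := by
    have h2 : 0 ≤ v ⬝ᵥ (ρ • P - Aᵀ * P * A).mulVec v := by
      simpa [dotProduct] using h1
    rw [Matrix.sub_mulVec, dotProduct_sub, Matrix.smul_mulVec,
      dotProduct_smul] at h2
    rw [hq]
    simpa [smul_eq_mul] using sub_nonneg.mp h2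
  unfold normP
  calc Real.sqrt ((A.mulVec v) ⬝ᵥ P.mulVec (A.mulVec v))
      ≤ Real.sqrt (ρ * (v ⬝ᵥ P.mulVec v)) := Real.sqrt_le_sqrt key
    _ = Real.sqrt ρ * Real.sqrt (v ⬝ᵥ P.mulVec v) := Real.sqrt_mul hρ0 _

/-- If `P ≻ 0`, `0 ≤ ρ < 1`, the matrices `A i` satisfy `A iᵀ P (A i) ⪯ ρ P` for `i < k`, and
`x (i+1) = A i x i + w i` for `i < k`, then
`‖x k‖_P ≤ ρ^{k/2} ‖x 0‖_P + ∑_{i<k} ρ^{(k-1-i)/2} ‖w i‖_P`. -/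
theorem stmt_10 {n : ℕ} (P : Matrix (Fin n) (Fin n) ℝ) (hP : P.PosDef)
    (ρ : ℝ) (hρ0 : 0 ≤ ρ) (hρ1 : ρ < 1) (k : ℕ)
    (A : ℕ → Matrix (Fin n) (Fin n) ℝ)
    (hA : ∀ i < k, (ρ • P - (A i)ᵀ * P * A i).PosSemidef)
    (x w : ℕ → Fin n → ℝ)
    (hx : ∀ i < k, x (i + 1) = (A i).mulVec (x i) + w i) :
    normP P (x k) ≤ ρ ^ ((k : ℝ) / 2) * normP P (x 0) +
      ∑ i ∈ Finset.range k, ρ ^ (((k : ℝ) - 1 - (i : ℝ)) / 2) * normP P (w i) := by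
  induction k with
  | zero => simp
  | succ k IH =>
    have hAk := hA k (Nat.lt_succ_self k)
    have hxk := hx k (Nat.lt_succ_self k)
    have IH' := IH (fun i hi => hA i (Nat.lt_succ_of_lt hi))
      (fun i hi => hx i (Nat.lt_succ_of_lt hi))
    have hnn : (0:ℝ) ≤ Real.sqrt ρ := Real.sqrt_nonneg _
    have h1 : normP P (x (k+1)) ≤ Real.sqrt ρ * normP P (x k) + normP P (w k) := by
      rw [hxk]
      exact le_trans (normP_triangle hP.posSemidef _ _)
        (add_le_add_left (normP_contract hρ0 hAk _) _)
    have e1 : Real.sqrt ρ * ρ ^ ((k:ℝ)/2) = ρ ^ (((k+1:ℕ):ℝ)/2) := by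
      have he : (((k+1:ℕ)):ℝ)/2 = 1/2 + (k:ℝ)/2 := by push_cast; ring
      rw [he, Real.rpow_add' hρ0 (by positivity), Real.sqrt_eq_rpow]
    have e2 : ∀ i ∈ Finset.range k,
        Real.sqrt ρ * (ρ ^ (((k:ℝ)-1-(i:ℝ))/2) * normP P (w i))
          = ρ ^ ((((k+1:ℕ):ℝ)-1-(i:ℝ))/2) * normP P (w i) := by
      intro i hi
      have hik : (i:ℝ) < k := by exact_mod_cast Finset.mem_range.mp hi
      have he : (((k+1:ℕ)):ℝ)-1-(i:ℝ) = 1 + ((k:ℝ)-1-(i:ℝ)) := by push_cast; ring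
      have hne : (1:ℝ)/2 + ((k:ℝ)-1-(i:ℝ))/2 ≠ 0 := by
        have : (0:ℝ) < ((k:ℝ)-(i:ℝ))/2 := by linarith
        intro h; apply this.ne'; linarith [h]
      rw [he, show (1 + ((k:ℝ)-1-(i:ℝ)))/2 = 1/2 + ((k:ℝ)-1-(i:ℝ))/2 by ring,
        Real.rpow_add' hρ0 hne, Real.sqrt_eq_rpow, mul_assoc]
    calc normP P (x (k+1)) ≤ Real.sqrt ρ * normP P (x k) + normP P (w k) := h1
      _ ≤ Real.sqrt ρ * (ρ ^ ((k:ℝ)/2) * normP P (x 0) +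
            ∑ i ∈ Finset.range k, ρ ^ (((k:ℝ)-1-(i:ℝ))/2) * normP P (w i)) + normP P (w k) := by
          exact add_le_add_left (mul_le_mul_of_nonneg_left IH' hnn) _
      _ = ρ ^ (((k+1:ℕ):ℝ)/2) * normP P (x 0) +
            (∑ i ∈ Finset.range k, ρ ^ ((((k+1:ℕ):ℝ)-1-(i:ℝ))/2) * normP P (w i)
              + ρ ^ ((((k+1:ℕ):ℝ)-1-(k:ℝ))/2) * normP P (w k)) := by
          rw [mul_add, Finset.mul_sum, ← mul_assoc, e1, Finset.sum_congr rfl e2]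
          have : (((k+1:ℕ)):ℝ)-1-(k:ℝ) = 0 := by push_cast; ring
          rw [this]
          norm_num
          ring
      _ = _ := by rw [← Finset.sum_range_succ]
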